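/- For any n ≥ k ≥ 1, the state |Φ₀ⁿ⟩ decomposes as |Φ₀ⁿ⟩ = (1/√2)( |Φ₀ᵏ⟩⊗|Φ₀^{n−k}⟩ − |Φ₁ᵏ⟩⊗|Φ₁^{n−k}⟩ ), where the first factor acts on the first k qubits and the second on the remaining n−k qubits. -/
import Mathlib


/-- Hamming weight of an m-bit string. -/
def hw {m : ℕ} (y : Fin m → Bool) : ℕ := (Finset.univ.filter (fun i => y i = true)).card

/-- The state |Φ₀ᵐ⟩. -/
noncomputable def Phi0 (m : ℕ) : (Fin m → Bool) → ℂ := fun y =>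
  if hw y % 4 = 0 then (((Real.sqrt ((2:ℝ) ^ ((m:ℤ) - 1)))⁻¹ : ℝ) : ℂ)
  else if hw y % 4 = 2 then -(((Real.sqrt ((2:ℝ) ^ ((m:ℤ) - 1)))⁻¹ : ℝ) : ℂ)
  else 0

/-- The state |Φ₁ᵐ⟩. -/
noncomputable def Phi1 (m : ℕ) : (Fin m → Bool) → ℂ := fun y =>
  if hw y % 4 = 1 then (((Real.sqrt ((2:ℝ) ^ ((m:ℤ) - 1)))⁻¹ : ℝ) : ℂ)
  else if hw y % 4 = 3 then -(((Real.sqrt ((2:ℝ) ^ ((m:ℤ) - 1)))⁻¹ : ℝ) : ℂ)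
  else 0

lemma hw_add (k m : ℕ) (y : Fin (k + m) → Bool) :
    hw y = hw (fun i => y (Fin.castAdd m i)) + hw (fun i => y (Fin.natAdd k i)) := by
  simp only [hw, Finset.card_filter]
  rw [Fin.sum_univ_add]

lemma sqrt_key (k m : ℕ) :
    ((Real.sqrt ((2:ℝ) ^ ((k:ℤ) + (m:ℤ) - 1)) : ℂ))⁻¹ =
      ((Real.sqrt 2 : ℂ))⁻¹ * (((Real.sqrt ((2:ℝ) ^ ((k:ℤ) - 1)) : ℂ))⁻¹ *
        ((Real.sqrt ((2:ℝ) ^ ((m:ℤ) - 1)) : ℂ))⁻¹) := by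
  have he : (2:ℝ) ^ ((k:ℤ) + (m:ℤ) - 1) =
      2 * ((2:ℝ) ^ ((k:ℤ) - 1) * (2:ℝ) ^ ((m:ℤ) - 1)) := by
    have h : (k:ℤ) + (m:ℤ) - 1 = 1 + (((k:ℤ) - 1) + ((m:ℤ) - 1)) := by ring
    rw [h, zpow_add₀ (by norm_num : (2:ℝ) ≠ 0), zpow_add₀ (by norm_num : (2:ℝ) ≠ 0), zpow_one]
  rw [he, Real.sqrt_mul (by positivity), Real.sqrt_mul (by positivity)]
  push_cast
  rw [mul_inv, mul_inv]

/-- |Φ₀ⁿ⟩ = (1/√2)(|Φ₀ᵏ⟩⊗|Φ₀^{n−k}⟩ − |Φ₁ᵏ⟩⊗|Φ₁^{n−k}⟩) for n = k + m, k ≥ 1. -/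
theorem stmt1 (k m : ℕ) (hk : 1 ≤ k) (y : Fin (k + m) → Bool) :
    Phi0 (k + m) y =
      (((Real.sqrt 2)⁻¹ : ℝ) : ℂ) *
        (Phi0 k (fun i => y (Fin.castAdd m i)) * Phi0 m (fun i => y (Fin.natAdd k i))
          - Phi1 k (fun i => y (Fin.castAdd m i)) * Phi1 m (fun i => y (Fin.natAdd k i))) := by
  have key := sqrt_key k m
  simp only [Phi0, Phi1, hw_add k m y]
  set a := hw (fun i => y (Fin.castAdd m i)) with ha'
  set b := hw (fun i => y (Fin.natAdd k i)) with hb'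
  have ha : a % 4 = 0 ∨ a % 4 = 1 ∨ a % 4 = 2 ∨ a % 4 = 3 := by omega
  have hb : b % 4 = 0 ∨ b % 4 = 1 ∨ b % 4 = 2 ∨ b % 4 = 3 := by omega
  rcases ha with ha | ha | ha | ha <;> rcases hb with hb | hb | hb | hb <;>
    simp only [ha, hb, show (a + b) % 4 = (a % 4 + b % 4) % 4 from by omega] <;>
    norm_num <;> exact key
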